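/- arXiv:2604.14633 — 4 statements merged into one kernel-verified Lean document; each statement's English description precedes it below -/
import Mathlib

section
/- Let V be a finite vertex set, s, t ∈ V distinct vertices, and let G be a directed graph on V given by an arc set E ⊆ V × V. Assume G is strongly connected and contains the arc (t,s). Let f be a finite collection of pairwise arc-disjoint directed paths from s to t in G, none of which uses the arc (t,s), and let the residual graph G_f be the directed graph whose arc set is obtained from E by removing every arc used by a path of f and adding its reversal. If there is a directed path from s to t in G_f, then G_f is strongly connected. -/
variable {V : Type*}

/-- The list of arcs traversed by a path given as a list of vertices. -/
def arcsOf (p : List V) : List (V × V) := p.zip p.tail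

/-- `p` is a directed path from `s` to `t` in the arc set `E`: a finite sequence of
vertices starting at `s` and ending at `t` with each consecutive pair an arc of `E`. -/
def IsPath (E : Set (V × V)) (s t : V) (p : List V) : Prop :=
  p.head? = some s ∧ p.getLast? = some t ∧ ∀ a ∈ arcsOf p, a ∈ E

/-- A directed graph (given by its arc set) is strongly connected if every ordered
pair of vertices is joined by a directed path. -/
def StronglyConnected (E : Set (V × V)) : Prop :=
  ∀ u v : V, Relation.ReflTransGen (fun a b : V => (a, b) ∈ E) u v

/-- The set of arcs used by a collection of paths `f`. -/
def usedArcs (f : List (List V)) : Set (V × V) :=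
  {a | a ∈ (f.map arcsOf).flatten}

/-- The residual graph `G_f`: every arc used by a path of `f` is removed from `E`
and its reversal is added. -/
def residualGraph (E : Set (V × V)) (f : List (List V)) : Set (V × V) :=
  (E \ usedArcs f) ∪ (Prod.swap '' usedArcs f)

lemma arcsOf_cons_cons (y z : V) (rest : List V) :
    arcsOf (y :: z :: rest) = (y, z) :: arcsOf (z :: rest) := rfl

/-- If all reversed arcs of `p` are in `R`, every vertex of `p` reaches the head. -/
lemma reach_head (R : Set (V × V)) :
    ∀ (p : List V), (∀ a ∈ arcsOf p, (a.2, a.1) ∈ R) →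
    ∀ x ∈ p, ∀ h, p.head? = some h →
    Relation.ReflTransGen (fun a b : V => (a, b) ∈ R) x h := by
  intro p
  induction p with
  | nil => simp
  | cons y rest ih =>
    intro harc x hx h hh
    simp only [List.head?_cons, Option.some.injEq] at hh
    subst hh
    rcases List.mem_cons.1 hx with rfl | hx
    · exact .refl
    · cases rest with
      | nil => simp at hx
      | cons z rest' =>
        have h1 : Relation.ReflTransGen (fun a b : V => (a, b) ∈ R) x z := by
          apply ih _ x hx z rfl
          intro a ha
          exact harc a (by rw [arcsOf_cons_cons]; exact List.mem_cons_of_mem _ ha)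
        exact h1.tail (harc (y, z) (by rw [arcsOf_cons_cons]; exact List.mem_cons_self))

/-- If all reversed arcs of `p` are in `R`, the last vertex reaches every vertex of `p`. -/
lemma last_reach (R : Set (V × V)) :
    ∀ (p : List V), (∀ a ∈ arcsOf p, (a.2, a.1) ∈ R) →
    ∀ x ∈ p, ∀ l, p.getLast? = some l →
    Relation.ReflTransGen (fun a b : V => (a, b) ∈ R) l x := by
  intro p
  induction p with
  | nil => simp
  | cons y rest ih =>
    intro harc x hx l hl
    cases rest with
    | nil =>
      simp only [List.getLast?_singleton, Option.some.injEq] at hl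
      simp only [List.mem_singleton] at hx
      subst hl; subst hx; exact .refl
    | cons z rest' =>
      have hl' : (z :: rest').getLast? = some l := by
        rw [List.getLast?_cons_cons] at hl; exact hl
      have harc' : ∀ a ∈ arcsOf (z :: rest'), (a.2, a.1) ∈ R := fun a ha =>
        harc a (by rw [arcsOf_cons_cons]; exact List.mem_cons_of_mem _ ha)
      rcases List.mem_cons.1 hx with rfl | hx
      · have h1 := ih harc' z (List.mem_cons_self) l hl'
        exact h1.tail (harc (x, z) (by rw [arcsOf_cons_cons]; exact List.mem_cons_self))
      · exact ih harc' x hx l hl'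

/-- **Lemma 1.3.** Let `G = (V, E)` be strongly connected with `(t, s) ∈ E`, `s ≠ t`,
and let `f` be a finite collection of pairwise arc-disjoint directed paths from `s`
to `t`, none of which uses the arc `(t, s)`. If there is a directed path from `s` to
`t` in the residual graph `G_f`, then `G_f` is strongly connected. -/
theorem residual_strongly_connected [Fintype V] (E : Set (V × V)) (s t : V)
    (hst : s ≠ t) (hsc : StronglyConnected E) (hts : (t, s) ∈ E)
    (f : List (List V)) (hpaths : ∀ p ∈ f, IsPath E s t p)
    (hdisj : ((f.map arcsOf).flatten).Nodup)
    (hnots : (t, s) ∉ (f.map arcsOf).flatten)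
    (haug : Relation.ReflTransGen (fun a b : V => (a, b) ∈ residualGraph E f) s t) :
    StronglyConnected (residualGraph E f) := by
  have key : ∀ a b : V, (a, b) ∈ E →
      Relation.ReflTransGen (fun a b : V => (a, b) ∈ residualGraph E f) a b := by
    intro a b hab
    by_cases hu : (a, b) ∈ usedArcs f
    · have hu' : (a, b) ∈ (f.map arcsOf).flatten := hu
      obtain ⟨l, hl, hmem⟩ := List.mem_flatten.1 hu'
      obtain ⟨p, hp, rfl⟩ := List.mem_map.1 hl
      obtain ⟨hhead, hlast, _⟩ := hpaths p hp
      have hswap : ∀ c ∈ arcsOf p, (c.2, c.1) ∈ residualGraph E f := by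
        intro c hc
        exact Or.inr ⟨c, List.mem_flatten.2 ⟨arcsOf p, List.mem_map.2 ⟨p, hp, rfl⟩, hc⟩, rfl⟩
      have ha : a ∈ p := (List.of_mem_zip hmem).1
      have hb : b ∈ p := List.mem_of_mem_tail (List.of_mem_zip hmem).2
      have h1 := reach_head (residualGraph E f) p hswap a ha s hhead
      have h2 := last_reach (residualGraph E f) p hswap b hb t hlast
      exact (h1.trans haug).trans h2
    · exact Relation.ReflTransGen.single (Or.inl ⟨hab, hu⟩)
  intro u v
  have h := hsc u v
  induction h with
  | refl => exact .refl
  | tail _ hstep ih => exact ih.trans (key _ _ hstep)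
end

section
/- Let x₁, x₂ ∈ ℝ and define w_i = 1/(max{x_i, 0} + 1) for i ∈ {1,2}. For any parameter 0 ≤ δ < 1, if |x₁ − x₂| ≤ δ/w₁, then w₁/(1+δ) ≤ w₂ ≤ w₁/(1−δ). -/
/-- **Stability (Lemma: Stability).**
For `x₁ x₂ : ℝ` with weights `wᵢ = 1/(max xᵢ 0 + 1)` and `0 ≤ δ < 1`,
if `|x₁ - x₂| ≤ δ / w₁` then `w₁/(1+δ) ≤ w₂ ≤ w₁/(1-δ)`. -/
theorem stability (x₁ x₂ δ : ℝ) (w₁ w₂ : ℝ)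
    (hw₁ : w₁ = 1 / (max x₁ 0 + 1)) (hw₂ : w₂ = 1 / (max x₂ 0 + 1))
    (hδ0 : 0 ≤ δ) (hδ1 : δ < 1) (h : |x₁ - x₂| ≤ δ / w₁) :
    w₁ / (1 + δ) ≤ w₂ ∧ w₂ ≤ w₁ / (1 - δ) := by
  set a := max x₁ 0 with ha
  set b := max x₂ 0 with hb
  have ha0 : 0 ≤ a := le_max_right _ _
  have hb0 : 0 ≤ b := le_max_right _ _
  have ha1 : (0:ℝ) < a + 1 := by linarith
  have hb1 : (0:ℝ) < b + 1 := by linarith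
  have hdw : δ / w₁ = δ * (a + 1) := by rw [hw₁]; field_simp
  have hlip : |a - b| ≤ |x₁ - x₂| := abs_max_sub_max_le_abs x₁ x₂ 0
  have habs : |a - b| ≤ δ * (a + 1) := by rw [hdw] at h; linarith
  obtain ⟨hl, hr⟩ := abs_le.mp habs
  have h1 : b + 1 ≤ (a + 1) * (1 + δ) := by nlinarith
  have h2 : (a + 1) * (1 - δ) ≤ b + 1 := by nlinarith
  constructor
  · rw [hw₁, hw₂, div_div]
    exact one_div_le_one_div_of_le hb1 h1
  · rw [hw₁, hw₂, div_div]
    exact one_div_le_one_div_of_le (by nlinarith) h2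
end

section
/- Let M > 0, let V be a finite vertex set with a potential function y : V → ℝ, and let v₀, v₁, …, v_k (k ≥ 1) be a sequence of vertices such that |y(v_{i+1}) − y(v_i)| ≤ M for every 0 ≤ i < k. Define the energy of an ordered pair (u,v) as E(u,v) = ∫_{y(v)−y(u)}^M 1/(max{x,0}+1) dx. Then Σ_{i=0}^{k−1} ( E(v_{i+1}, v_i) − E(v_i, v_{i+1}) ) ≤ y(v_k) − y(v₀) + k·ln(M+1). -/
open MeasureTheory

lemma energy_cont : Continuous (fun x : ℝ => 1 / (max x 0 + 1)) := by
  apply Continuous.div continuous_const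
  · exact ((continuous_id.max continuous_const).add continuous_const)
  · intro x
    have : (0:ℝ) ≤ max x 0 := le_max_right _ _
    linarith

lemma energy_int (a b : ℝ) :
    IntervalIntegrable (fun x : ℝ => 1 / (max x 0 + 1)) volume a b :=
  energy_cont.intervalIntegrable a b

lemma energy_right (c : ℝ) (hc : 0 ≤ c) :
    ∫ x in (0:ℝ)..c, 1 / (max x 0 + 1) = Real.log (c + 1) := by
  have h1 : ∫ x in (0:ℝ)..c, 1 / (max x 0 + 1) = ∫ x in (0:ℝ)..c, 1 / (x + 1) := by
    apply intervalIntegral.integral_congr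
    intro x hx
    rw [Set.uIcc_of_le hc] at hx
    simp [max_eq_left hx.1]
  have h2 : ∫ x in (0:ℝ)..c, 1 / (x + 1) = Real.log (c + 1) - Real.log (0 + 1) := by
    apply intervalIntegral.integral_eq_sub_of_hasDerivAt
    · intro x hx
      rw [Set.uIcc_of_le hc] at hx
      have hx1 : 0 < x + 1 := by linarith [hx.1]
      have : HasDerivAt (fun x : ℝ => Real.log (x + 1)) (1 / (x + 1)) x := by
        have h := (Real.hasDerivAt_log (ne_of_gt hx1)).comp x
          ((hasDerivAt_id x).add_const 1)
        simpa [one_div, Function.comp_def] using h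
      exact this
    · apply ContinuousOn.intervalIntegrable
      apply ContinuousOn.div continuousOn_const
      · exact (continuousOn_id.add continuousOn_const)
      · intro x hx
        rw [Set.uIcc_of_le hc] at hx
        have : (0:ℝ) ≤ x := hx.1
        positivity
  rw [h1, h2]; norm_num

lemma energy_left (a : ℝ) (ha : a ≤ 0) :
    ∫ x in a..(0:ℝ), 1 / (max x 0 + 1) = -a := by
  have h1 : ∫ x in a..(0:ℝ), 1 / (max x 0 + 1) = ∫ x in a..(0:ℝ), (1:ℝ) := by
    apply intervalIntegral.integral_congr
    intro x hx
    rw [Set.uIcc_of_le ha] at hx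
    simp [max_eq_right hx.2]
  rw [h1]; simp

lemma key (M : ℝ) (hM : 0 < M) (d : ℝ) (hd : |d| ≤ M) :
    (∫ x in (-d)..M, 1 / (max x 0 + 1)) - (∫ x in d..M, 1 / (max x 0 + 1))
      ≤ d + Real.log (M + 1) := by
  have hsplit : (∫ x in (-d)..d, 1 / (max x 0 + 1)) + (∫ x in d..M, 1 / (max x 0 + 1))
      = ∫ x in (-d)..M, 1 / (max x 0 + 1) :=
    intervalIntegral.integral_add_adjacent_intervals (energy_int _ _) (energy_int _ _)
  have heq : (∫ x in (-d)..M, 1 / (max x 0 + 1)) - (∫ x in d..M, 1 / (max x 0 + 1))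
      = ∫ x in (-d)..d, 1 / (max x 0 + 1) := by linarith
  rw [heq]
  have hsplit2 : (∫ x in (-d)..(0:ℝ), 1 / (max x 0 + 1)) + (∫ x in (0:ℝ)..d, 1 / (max x 0 + 1))
      = ∫ x in (-d)..d, 1 / (max x 0 + 1) :=
    intervalIntegral.integral_add_adjacent_intervals (energy_int _ _) (energy_int _ _)
  rw [← hsplit2]
  rcases le_or_gt 0 d with h0 | h0
  · rw [energy_left (-d) (by linarith), energy_right d h0]
    have hdM : d ≤ M := (abs_le.mp hd).2
    have := Real.log_le_log (by linarith) (show d + 1 ≤ M + 1 by linarith)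
    linarith
  · -- d < 0
    have h1 : ∫ x in (-d)..(0:ℝ), 1 / (max x 0 + 1)
        = -∫ x in (0:ℝ)..(-d), 1 / (max x 0 + 1) :=
      (intervalIntegral.integral_symm _ _)
    rw [h1, energy_right (-d) (by linarith)]
    have h2 : ∫ x in (0:ℝ)..d, 1 / (max x 0 + 1) = -(-d) := by
      rw [intervalIntegral.integral_symm, energy_left d (le_of_lt h0)]
    rw [h2]
    have hl1 : 0 ≤ Real.log (-d + 1) := Real.log_nonneg (by linarith)
    have hl2 : 0 ≤ Real.log (M + 1) := Real.log_nonneg (by linarith)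
    linarith

/-- **Energy increase along a flipped path.** For `M > 0`, a potential function
`y : V → ℝ` on a finite vertex set, and a sequence of vertices `v 0, v 1, …, v k`
(`k ≥ 1`) with `|y (v (i+1)) - y (v i)| ≤ M` for all `i < k`, the total change in
energy when every arc `(v i, v (i+1))` is flipped to `(v (i+1), v i)` is at most
`y (v k) - y (v 0) + k·ln(M+1)`, where the energy of an ordered pair `(u, w)` is
`E(u, w) = ∫_{y w - y u}^M 1/(max x 0 + 1) dx`. -/
theorem energy_increase_path {V : Type*} [Fintype V] (M : ℝ) (hM : 0 < M)
    (y : V → ℝ) (k : ℕ) (hk : 1 ≤ k) (v : ℕ → V)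
    (hbound : ∀ i < k, |y (v (i + 1)) - y (v i)| ≤ M) :
    ∑ i ∈ Finset.range k,
        ((∫ x in (y (v i) - y (v (i + 1)))..M, 1 / (max x 0 + 1)) -
          (∫ x in (y (v (i + 1)) - y (v i))..M, 1 / (max x 0 + 1)))
      ≤ y (v k) - y (v 0) + k * Real.log (M + 1) := by
  have step : ∀ i ∈ Finset.range k,
      ((∫ x in (y (v i) - y (v (i + 1)))..M, 1 / (max x 0 + 1)) -
        (∫ x in (y (v (i + 1)) - y (v i))..M, 1 / (max x 0 + 1)))
      ≤ (y (v (i+1)) - y (v i)) + Real.log (M + 1) := by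
    intro i hi
    have hb := hbound i (Finset.mem_range.mp hi)
    have := key M hM (y (v (i + 1)) - y (v i)) hb
    have hneg : -(y (v (i + 1)) - y (v i)) = y (v i) - y (v (i + 1)) := by ring
    rw [hneg] at this
    exact this
  calc ∑ i ∈ Finset.range k, _ ≤ ∑ i ∈ Finset.range k,
        ((y (v (i+1)) - y (v i)) + Real.log (M + 1)) := Finset.sum_le_sum step
    _ = y (v k) - y (v 0) + k * Real.log (M + 1) := by
        rw [Finset.sum_add_distrib, Finset.sum_range_sub (fun i => y (v i)),
          Finset.sum_const, Finset.card_range, nsmul_eq_mul]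
end

section
/- Let V be a finite vertex set, E ⊆ V × V a finite arc set, U ≥ 1, and u : E → ℝ a weight function with u(e) ∈ [1/U, U] for every arc e. For each integer i, let H_i ⊆ E be the set of arcs whose weight lies in the interval [2^i, 2^{i+1}). Let β ≥ 1 and let S ⊆ V satisfy β·u(∂⁺S) ≥ u(∂S). Then there exists an integer i such that |∂⁺_{H_i}S| ≥ (1/(2β))·|∂_{H_i}S|, where the boundaries are taken with respect to the arcs in H_i. -/
open Finset

open scoped Classical in
/-- The out-boundary `∂⁺S`: arcs `(u,v) ∈ E` with `u ∈ S` and `v ∉ S`. -/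
noncomputable def outBoundary {V : Type*} (E : Finset (V × V)) (S : Finset V) :
    Finset (V × V) :=
  E.filter fun e => e.1 ∈ S ∧ e.2 ∉ S

open scoped Classical in
/-- The boundary `∂S`: arcs `(u,v) ∈ E` with exactly one endpoint in `S`. -/
noncomputable def boundary {V : Type*} (E : Finset (V × V)) (S : Finset V) :
    Finset (V × V) :=
  E.filter fun e => (e.1 ∈ S ∧ e.2 ∉ S) ∨ (e.2 ∈ S ∧ e.1 ∉ S)

open scoped Classical in
/-- The bucket `H_i ⊆ E` of arcs whose weight lies in `[2^i, 2^(i+1))`. -/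
noncomputable def bucket {V : Type*} (E : Finset (V × V)) (u : V × V → ℝ) (i : ℤ) :
    Finset (V × V) :=
  E.filter fun e => (2 : ℝ) ^ i ≤ u e ∧ u e < (2 : ℝ) ^ (i + 1)

lemma zpow_mem_iff_floor_logb (x : ℝ) (hx : 0 < x) (i : ℤ) :
    ((2:ℝ)^i ≤ x ∧ x < (2:ℝ)^(i+1)) ↔ ⌊Real.logb 2 x⌋ = i := by
  rw [Int.floor_eq_iff]
  have h1 : ((i:ℝ) ≤ Real.logb 2 x) ↔ (2:ℝ)^(i:ℝ) ≤ x :=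
    Real.le_logb_iff_rpow_le (by norm_num) hx
  have h2 : (Real.logb 2 x < (i:ℝ)+1) ↔ x < (2:ℝ)^((i:ℝ)+1) :=
    Real.logb_lt_iff_lt_rpow (by norm_num) hx
  rw [h1, h2]
  rw [show ((i:ℝ)+1) = ((i+1 : ℤ):ℝ) by push_cast; ring]
  rw [Real.rpow_intCast, Real.rpow_intCast]


/-- **Bucketing reduction to unweighted graphs.** Let `u : E → ℝ` be arc weights in
`[1/U, U]` with `U ≥ 1`, and for `i : ℤ` let `H_i` be the arcs of weight in
`[2^i, 2^(i+1))`. If `β ≥ 1` and `S ⊆ V` satisfies `β·u(∂⁺S) ≥ u(∂S)`, then some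
bucket `H_i` satisfies `|∂⁺_{H_i}S| ≥ (1/(2β))·|∂_{H_i}S|`. -/
theorem bucket_balanced_cut {V : Type*} [Fintype V]
    (E : Finset (V × V)) (U : ℝ) (hU : 1 ≤ U) (u : V × V → ℝ)
    (hu : ∀ e ∈ E, u e ∈ Set.Icc (1 / U) U)
    (β : ℝ) (hβ : 1 ≤ β) (S : Finset V)
    (hcut : β * ∑ e ∈ outBoundary E S, u e ≥ ∑ e ∈ boundary E S, u e) :
    ∃ i : ℤ, ((outBoundary (bucket E u i) S).card : ℝ)
      ≥ (1 / (2 * β)) * ((boundary (bucket E u i) S).card : ℝ) := by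
  classical
  have hβ0 : (0:ℝ) < β := lt_of_lt_of_le one_pos hβ
  have hupos : ∀ e ∈ E, 0 < u e := by
    intro e he
    have h1 := (hu e he).1
    have : (0:ℝ) < 1 / U := by positivity
    linarith
  set f : V × V → ℤ := fun e => ⌊Real.logb 2 (u e)⌋ with hf
  -- bucket boundaries are fibers
  have hbd : ∀ i : ℤ, boundary (bucket E u i) S
      = (boundary E S).filter (fun e => f e = i) := by
    intro i
    ext e
    simp only [boundary, bucket, mem_filter]
    constructor
    · rintro ⟨⟨he, hr⟩, hs⟩
      exact ⟨⟨he, hs⟩, (zpow_mem_iff_floor_logb _ (hupos e he) i).1 hr⟩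
    · rintro ⟨⟨he, hs⟩, hr⟩
      exact ⟨⟨he, (zpow_mem_iff_floor_logb _ (hupos e he) i).2 hr⟩, hs⟩
  have hob : ∀ i : ℤ, outBoundary (bucket E u i) S
      = (outBoundary E S).filter (fun e => f e = i) := by
    intro i
    ext e
    simp only [outBoundary, bucket, mem_filter]
    constructor
    · rintro ⟨⟨he, hr⟩, hs⟩
      exact ⟨⟨he, hs⟩, (zpow_mem_iff_floor_logb _ (hupos e he) i).1 hr⟩
    · rintro ⟨⟨he, hs⟩, hr⟩
      exact ⟨⟨he, (zpow_mem_iff_floor_logb _ (hupos e he) i).2 hr⟩, hs⟩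
  by_contra hcon
  push_neg at hcon
  have hoE : outBoundary E S ⊆ E := filter_subset _ _
  have hbE : boundary E S ⊆ E := filter_subset _ _
  have hosub : outBoundary E S ⊆ boundary E S := by
    intro e he
    simp only [outBoundary, boundary, mem_filter] at he ⊢
    exact ⟨he.1, Or.inl he.2⟩
  rcases (boundary E S).eq_empty_or_nonempty with hb | hb
  · have h0 := hcon 0
    rw [hbd 0, hob 0, hb, filter_empty] at h0
    simp only [card_empty, Nat.cast_zero, mul_zero] at h0
    exact absurd h0 (Nat.cast_nonneg (α := ℝ) _).not_gt
  · set I := (boundary E S).image f with hI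
    have hIne : I.Nonempty := hb.image f
    have hkey : ∀ i ∈ I, β * ∑ e ∈ (outBoundary E S).filter (fun e => f e = i), u e
        < ∑ e ∈ (boundary E S).filter (fun e => f e = i), u e := by
      intro i hi
      set oi := (outBoundary E S).filter (fun e => f e = i) with hoi
      set bi := (boundary E S).filter (fun e => f e = i) with hbi
      have hbicard : 1 ≤ bi.card := by
        obtain ⟨e, he, hfe⟩ := mem_image.1 hi
        exact card_pos.2 ⟨e, mem_filter.2 ⟨he, hfe⟩⟩
      have hci := hcon i
      rw [hbd i, hob i, ← hoi, ← hbi] at hci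
      have hratio : β * (oi.card : ℝ) < (bi.card : ℝ) / 2 := by
        calc β * (oi.card:ℝ) < β * (1/(2*β) * (bi.card:ℝ)) :=
              mul_lt_mul_of_pos_left hci hβ0
          _ = (bi.card:ℝ) / 2 := by field_simp
      have hc : (0:ℝ) < (2:ℝ)^i := by positivity
      have hub : ∑ e ∈ oi, u e ≤ (oi.card : ℝ) * (2 * (2:ℝ)^i) := by
        have : ∀ e ∈ oi, u e ≤ 2 * (2:ℝ)^i := by
          intro e he
          rw [hoi, mem_filter] at he
          have heE : e ∈ E := hoE he.1
          have := (zpow_mem_iff_floor_logb (u e) (hupos e heE) i).2 he.2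
          have h2 : (2:ℝ)^(i+1) = 2 * (2:ℝ)^i := by
            rw [zpow_add_one₀ (by norm_num : (2:ℝ) ≠ 0)]; ring
          linarith [this.2, h2.le]
        calc ∑ e ∈ oi, u e ≤ ∑ e ∈ oi, (2 * (2:ℝ)^i) := Finset.sum_le_sum this
          _ = (oi.card : ℝ) * (2 * (2:ℝ)^i) := by rw [Finset.sum_const]; simp [mul_comm]
      have hlb : (bi.card : ℝ) * (2:ℝ)^i ≤ ∑ e ∈ bi, u e := by
        have : ∀ e ∈ bi, (2:ℝ)^i ≤ u e := by
          intro e he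
          rw [hbi, mem_filter] at he
          have heE : e ∈ E := hbE he.1
          exact ((zpow_mem_iff_floor_logb (u e) (hupos e heE) i).2 he.2).1
        calc (bi.card : ℝ) * (2:ℝ)^i = ∑ _e ∈ bi, (2:ℝ)^i := by
              rw [Finset.sum_const]; simp [mul_comm]
          _ ≤ ∑ e ∈ bi, u e := Finset.sum_le_sum this
      have hnn : 0 ≤ ∑ e ∈ oi, u e := by
        apply Finset.sum_nonneg
        intro e he
        exact (hupos e (hoE (mem_filter.1 he).1)).le
      nlinarith [hub, hlb, hratio, hc, hβ0]
    have hmapo : ∀ e ∈ outBoundary E S, f e ∈ I :=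
      fun e he => mem_image.2 ⟨e, hosub he, rfl⟩
    have hmapb : ∀ e ∈ boundary E S, f e ∈ I :=
      fun e he => mem_image.2 ⟨e, he, rfl⟩
    have hsumo : ∑ i ∈ I, ∑ e ∈ (outBoundary E S).filter (fun e => f e = i), u e
        = ∑ e ∈ outBoundary E S, u e := Finset.sum_fiberwise_of_maps_to hmapo u
    have hsumb : ∑ i ∈ I, ∑ e ∈ (boundary E S).filter (fun e => f e = i), u e
        = ∑ e ∈ boundary E S, u e := Finset.sum_fiberwise_of_maps_to hmapb u
    have : β * ∑ e ∈ outBoundary E S, u e < ∑ e ∈ boundary E S, u e := by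
      rw [← hsumo, ← hsumb, Finset.mul_sum]
      exact Finset.sum_lt_sum_of_nonempty hIne hkey
    linarith [hcut]
end
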